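/- Let L ≥ 2, m ≥ 1, r ≥ 1, and K ≥ 1 be integers, set N = 2^L·m, and let n_b^(2), …, n_b^(L) and n_b^(ad) be nonnegative integers all bounded by a nonnegative integer n_b. Then the total number of weight parameters of the convolutional multiscale neural network, N_{p,CNN}^MNN = Σ_{ℓ=2}^{L} ( r·(N/2^ℓ) + K·r²·(2·n_b^(ℓ)+1) + r·(N/2^ℓ) ) + K·m²·(2·n_b^(ad)+1), satisfies N_{p,CNN}^MNN ≤ r·N + (r²·log₂(N) + m²)·(2·n_b+1)·K. -/

import Mathlib

lemma aux_geom_sum : ∀ L : ℕ, (∑ l ∈ Finset.Icc 2 L, 2 * 2 ^ (L - l)) ≤ 2 ^ L - 2 := by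
  intro L
  induction L with
  | zero => simp
  | succ n ih =>
    by_cases h : 2 ≤ n + 1
    · rw [Finset.sum_Icc_succ_top h]
      have hrw : ∑ l ∈ Finset.Icc 2 n, 2 * 2 ^ (n + 1 - l)
          = 2 * ∑ l ∈ Finset.Icc 2 n, 2 * 2 ^ (n - l) := by
        rw [Finset.mul_sum]
        apply Finset.sum_congr rfl
        intro l hl
        have hl' : l ≤ n := (Finset.mem_Icc.mp hl).2
        have : n + 1 - l = (n - l) + 1 := by omega
        rw [this, pow_succ]; ring
      have hn1 : (2:ℕ) ≤ 2 ^ n := by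
        have h1n : 1 ≤ n := by omega
        calc (2:ℕ) = 2 ^ 1 := rfl
        _ ≤ 2 ^ n := Nat.pow_le_pow_right (by norm_num) h1n
      rw [hrw]
      simp only [Nat.sub_self, pow_zero, mul_one, pow_succ]
      omega
    · have : n = 0 := by omega
      subst this
      simp

theorem stmt_10 (L m r K : ℕ) (hL : 2 ≤ L) (hm : 1 ≤ m) (hr : 1 ≤ r) (hK : 1 ≤ K)
    (N : ℕ) (hN : N = 2 ^ L * m)
    (nb : ℕ → ℕ) (nbad nbmax : ℕ)
    (hnb : ∀ l, 2 ≤ l → l ≤ L → nb l ≤ nbmax) (hnbad : nbad ≤ nbmax)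
    (Np : ℕ)
    (hNp : Np = (∑ l ∈ Finset.Icc 2 L,
        (r * (N / 2 ^ l) + K * r ^ 2 * (2 * nb l + 1) + r * (N / 2 ^ l)))
      + K * m ^ 2 * (2 * nbad + 1)) :
    (Np : ℝ) ≤ r * N + (r ^ 2 * Real.logb 2 N + m ^ 2) * (2 * nbmax + 1) * K := by
  have hdiv : ∀ l ∈ Finset.Icc 2 L, N / 2 ^ l = 2 ^ (L - l) * m := by
    intro l hl
    have hl' : l ≤ L := (Finset.mem_Icc.mp hl).2
    have hpow : 2 ^ L = 2 ^ l * 2 ^ (L - l) := by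
      rw [← pow_add]; congr 1; omega
    rw [hN, hpow, mul_assoc, Nat.mul_div_cancel_left _ (pow_pos (by norm_num) l)]
  have key : Np ≤ r * N + (r ^ 2 * (L - 1) + m ^ 2) * (2 * nbmax + 1) * K := by
    rw [hNp]
    have h1 : ∑ l ∈ Finset.Icc 2 L,
        (r * (N / 2 ^ l) + K * r ^ 2 * (2 * nb l + 1) + r * (N / 2 ^ l))
        ≤ ∑ l ∈ Finset.Icc 2 L,
        (r * m * (2 * 2 ^ (L - l)) + K * r ^ 2 * (2 * nbmax + 1)) := by
      apply Finset.sum_le_sum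
      intro l hl
      obtain ⟨h2l, hlL⟩ := Finset.mem_Icc.mp hl
      rw [hdiv l hl]
      have hb := hnb l h2l hlL
      have e : r * (2 ^ (L - l) * m) + r * (2 ^ (L - l) * m) = r * m * (2 * 2 ^ (L - l)) := by
        ring
      have e2 : K * r ^ 2 * (2 * nb l + 1) ≤ K * r ^ 2 * (2 * nbmax + 1) :=
        Nat.mul_le_mul_left _ (by omega)
      omega
    have h2 : ∑ l ∈ Finset.Icc 2 L,
        (r * m * (2 * 2 ^ (L - l)) + K * r ^ 2 * (2 * nbmax + 1))
        = r * m * (∑ l ∈ Finset.Icc 2 L, 2 * 2 ^ (L - l))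
          + (L - 1) * (K * r ^ 2 * (2 * nbmax + 1)) := by
      rw [Finset.sum_add_distrib, ← Finset.mul_sum, Finset.sum_const, Nat.card_Icc]
      simp [smul_eq_mul]
    have h4 : r * m * (∑ l ∈ Finset.Icc 2 L, 2 * 2 ^ (L - l)) ≤ r * N := by
      rw [hN]
      calc r * m * (∑ l ∈ Finset.Icc 2 L, 2 * 2 ^ (L - l)) ≤ r * m * (2 ^ L - 2) :=
        Nat.mul_le_mul_left _ (aux_geom_sum L)
      _ ≤ r * m * 2 ^ L := Nat.mul_le_mul_left _ (Nat.sub_le _ _)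
      _ = r * (2 ^ L * m) := by ring
    have h5 : K * m ^ 2 * (2 * nbad + 1) ≤ K * m ^ 2 * (2 * nbmax + 1) :=
      Nat.mul_le_mul_left _ (by omega)
    calc ∑ l ∈ Finset.Icc 2 L,
          (r * (N / 2 ^ l) + K * r ^ 2 * (2 * nb l + 1) + r * (N / 2 ^ l))
          + K * m ^ 2 * (2 * nbad + 1)
        ≤ (r * m * (∑ l ∈ Finset.Icc 2 L, 2 * 2 ^ (L - l))
            + (L - 1) * (K * r ^ 2 * (2 * nbmax + 1))) + K * m ^ 2 * (2 * nbmax + 1) :=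
          Nat.add_le_add (h2 ▸ h1) h5
      _ ≤ (r * N + (L - 1) * (K * r ^ 2 * (2 * nbmax + 1))) + K * m ^ 2 * (2 * nbmax + 1) :=
          Nat.add_le_add_right (Nat.add_le_add_right h4 _) _
      _ = r * N + (r ^ 2 * (L - 1) + m ^ 2) * (2 * nbmax + 1) * K := by ring
  have hlog : ((L : ℝ) - 1) ≤ Real.logb 2 N := by
    have hNge : (2:ℝ) ^ L ≤ (N:ℝ) := by
      rw [hN]; push_cast
      nlinarith [pow_pos (by norm_num : (0:ℝ) < 2) L, (by exact_mod_cast hm : (1:ℝ) ≤ m)]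
    have h1 : Real.logb 2 ((2:ℝ) ^ L) ≤ Real.logb 2 N :=
      Real.logb_le_logb_of_le (by norm_num) (pow_pos (by norm_num) L) hNge
    have h2 : Real.logb 2 ((2:ℝ) ^ L) = L := by
      rw [Real.logb_pow, Real.logb_self_eq_one (by norm_num)]
      ring
    rw [h2] at h1
    linarith
  have cast_key : (Np : ℝ) ≤ r * N + (r ^ 2 * ((L:ℝ) - 1) + m ^ 2) * (2 * nbmax + 1) * K := by
    have hcast : ((r * N + (r ^ 2 * (L - 1) + m ^ 2) * (2 * nbmax + 1) * K : ℕ) : ℝ)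
        = r * N + (r ^ 2 * ((L:ℝ) - 1) + m ^ 2) * (2 * nbmax + 1) * K := by
      push_cast [Nat.cast_sub (by omega : 1 ≤ L)]
      ring
    calc (Np:ℝ) ≤ _ := Nat.cast_le.mpr key
      _ = _ := hcast
  refine le_trans cast_key ?_
  gcongr
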